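/- Maximum principle for the right fractional derivative: let 0 < α < 1 and let φ be a Schwartz function on ℝ with φ(x₀) = 0 for some x₀ and φ(x) ≥ 0 for all x ≥ x₀. Then (D_right)^α φ(x₀) ≤ 0, with equality if and only if φ(x) = 0 for all x ≥ x₀. -/

import Mathlib

open Real MeasureTheory

/-- The right fractional derivative of order `α`:
`(D_right)^α φ(x) = (1/Γ(-α)) ∫_x^∞ (φ(t) - φ(x))/(t-x)^{1+α} dt`. -/
noncomputable def Dright (α : ℝ) (φ : ℝ → ℝ) (x : ℝ) : ℝ :=
  (1 / Real.Gamma (-α)) * ∫ t in Set.Ioi x, (φ t - φ x) / (t - x) ^ (1 + α)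

/-- Maximum principle for the right fractional derivative. -/
theorem maximum_principle (α : ℝ) (hα : 0 < α) (hα1 : α < 1)
    (φ : SchwartzMap ℝ ℝ) (x₀ : ℝ) (h0 : φ x₀ = 0) (hpos : ∀ x, x₀ ≤ x → 0 ≤ φ x) :
    Dright α (fun x => φ x) x₀ ≤ 0 ∧
      (Dright α (fun x => φ x) x₀ = 0 ↔ ∀ x, x₀ ≤ x → φ x = 0) := by
  set f : ℝ → ℝ := fun t => (φ t - φ x₀) / (t - x₀) ^ (1 + α) with hf
  have hfeq : ∀ t, f t = φ t / (t - x₀) ^ (1 + α) := by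
    intro t; simp [hf, h0]
  -- measurability
  have hmeas0 : Measurable f :=
    (φ.continuous.measurable.sub measurable_const).div
      (((continuous_id.sub continuous_const).rpow_const
        (fun _ => Or.inr (by linarith))).measurable)
  have hmeas : AEStronglyMeasurable f (volume.restrict (Set.Ioi x₀)) :=
    hmeas0.aestronglyMeasurable
  -- nonnegativity on Ioi x₀
  have hdpos : ∀ t ∈ Set.Ioi x₀, 0 < (t - x₀) ^ (1 + α) := by
    intro t ht
    exact Real.rpow_pos_of_pos (by simpa [sub_pos] using ht) _
  have hnonneg : ∀ t ∈ Set.Ioi x₀, 0 ≤ f t := by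
    intro t ht
    rw [hfeq]
    exact div_nonneg (hpos t (le_of_lt ht)) (hdpos t ht).le
  -- Lipschitz bound near x₀
  obtain ⟨C, hCpos, hC⟩ := φ.decay 0 1
  have hfderiv : ∀ x : ℝ, ‖fderiv ℝ (fun t => φ t) x‖ ≤ C := by
    intro x
    have := hC x
    simp only [pow_zero, one_mul] at this
    rwa [← norm_iteratedFDeriv_fderiv, norm_iteratedFDeriv_zero] at this
  have hlip : ∀ t : ℝ, ‖φ t - φ x₀‖ ≤ C * ‖t - x₀‖ := by
    intro t
    exact (convex_univ (𝕜 := ℝ)).norm_image_sub_le_of_norm_fderiv_le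
      (fun x _ => ((φ.smooth 1).differentiable (by norm_num)) x) (fun x _ => hfderiv x)
      (Set.mem_univ x₀) (Set.mem_univ t)
  -- integrability on Ioc x₀ (x₀+1)
  have hg : IntegrableOn (fun t => C * (t - x₀) ^ (-α)) (Set.Ioc x₀ (x₀ + 1)) := by
    have h1 : IntervalIntegrable (fun x : ℝ => x ^ (-α)) volume 0 1 :=
      intervalIntegral.intervalIntegrable_rpow' (by linarith)
    have h2 := h1.comp_sub_right x₀
    simp only [zero_add, add_comm (1 : ℝ) x₀] at h2
    exact ((intervalIntegrable_iff_integrableOn_Ioc_of_le (by linarith)).mp h2).const_mul C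
  have hint1 : IntegrableOn f (Set.Ioc x₀ (x₀ + 1)) := by
    apply MeasureTheory.Integrable.mono hg hmeas0.aestronglyMeasurable.restrict
    rw [ae_restrict_iff' measurableSet_Ioc]
    filter_upwards with t ht'
    have htpos : 0 < t - x₀ := by simpa [sub_pos] using ht'.1
    have hd : (t - x₀) ^ (1 + α) = (t - x₀) * (t - x₀) ^ α := by
      rw [Real.rpow_add htpos, Real.rpow_one]
    have hbound : |φ t| ≤ C * (t - x₀) := by
      have := hlip t
      rw [h0, sub_zero] at this
      simpa [abs_of_pos htpos] using this
    have hroot : 0 < (t - x₀) ^ α := Real.rpow_pos_of_pos htpos α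
    rw [Real.norm_eq_abs, Real.norm_eq_abs, hfeq t, abs_div, hd,
      abs_of_pos (by positivity : (0:ℝ) < (t - x₀) * (t - x₀) ^ α)]
    have hrw : C * (t - x₀) ^ (-α) = (C * (t - x₀)) / ((t - x₀) * (t - x₀) ^ α) := by
      rw [Real.rpow_neg htpos.le]
      field_simp
    have h4 : |φ t| / ((t - x₀) * (t - x₀) ^ α) ≤ (C * (t - x₀)) / ((t - x₀) * (t - x₀) ^ α) := by
      gcongr
    calc |φ t| / ((t - x₀) * (t - x₀) ^ α) ≤ (C * (t - x₀)) / ((t - x₀) * (t - x₀) ^ α) := h4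
      _ = C * (t - x₀) ^ (-α) := hrw.symm
      _ ≤ |C * (t - x₀) ^ (-α)| := le_abs_self _
  -- integrability on Ioi (x₀+1)
  have hint2 : IntegrableOn f (Set.Ioi (x₀ + 1)) := by
    apply MeasureTheory.Integrable.mono (φ.integrable (μ := volume)).integrableOn hmeas0.aestronglyMeasurable.restrict
    rw [ae_restrict_iff' measurableSet_Ioi]
    filter_upwards with t ht'
    have h1t : (1 : ℝ) ≤ t - x₀ := by simp only [Set.mem_Ioi] at ht'; linarith
    have hd1 : (1 : ℝ) ≤ (t - x₀) ^ (1 + α) := by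
      calc (1 : ℝ) = 1 ^ (1 + α) := (Real.one_rpow _).symm
        _ ≤ (t - x₀) ^ (1 + α) := Real.rpow_le_rpow zero_le_one h1t (by linarith)
    rw [Real.norm_eq_abs, hfeq t, abs_div, abs_of_pos (by linarith : (0:ℝ) < (t - x₀) ^ (1 + α))]
    calc |φ t| / (t - x₀) ^ (1 + α) ≤ |φ t| / 1 := by
          gcongr
      _ = ‖φ t‖ := by rw [div_one, Real.norm_eq_abs]
  have hint : IntegrableOn f (Set.Ioi x₀) := by
    have := hint1.union hint2
    rwa [Set.Ioc_union_Ioi_eq_Ioi (by linarith)] at this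
  -- the integral and the constant
  set I : ℝ := ∫ t in Set.Ioi x₀, f t with hI
  have hInn : 0 ≤ I := setIntegral_nonneg measurableSet_Ioi hnonneg
  have hΓpos : 0 < Real.Gamma (1 - α) := Real.Gamma_pos_of_pos (by linarith)
  have hΓ : Real.Gamma (-α) < 0 := by
    have h1 : Real.Gamma (-α + 1) = -α * Real.Gamma (-α) :=
      Real.Gamma_add_one (by linarith)
    have h2 : -α + 1 = 1 - α := by ring
    rw [h2] at h1
    nlinarith
  have hc : (1 : ℝ) / Real.Gamma (-α) < 0 := by
    exact div_neg_of_pos_of_neg one_pos hΓ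
  have hD : Dright α (fun x => φ x) x₀ = (1 / Real.Gamma (-α)) * I := rfl
  constructor
  · rw [hD]
    have := mul_le_mul_of_nonneg_right hc.le hInn
    simpa using this
  · rw [hD]
    have hne : (1 : ℝ) / Real.Gamma (-α) ≠ 0 := ne_of_lt hc
    constructor
    · intro h
      have hI0 : I = 0 := by
        rcases mul_eq_zero.mp h with h' | h'
        · exact absurd h' hne
        · exact h'
      -- from I = 0 deduce f = 0 a.e. on Ioi x₀
      have hnn_ae : 0 ≤ᵐ[volume.restrict (Set.Ioi x₀)] f := by
        have : ∀ᵐ t ∂volume.restrict (Set.Ioi x₀), 0 ≤ f t := by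
          rw [ae_restrict_iff' measurableSet_Ioi]
          filter_upwards with t ht using hnonneg t ht
        exact this
      have hae : f =ᵐ[volume.restrict (Set.Ioi x₀)] 0 :=
        (integral_eq_zero_iff_of_nonneg_ae hnn_ae hint).mp hI0
      have hae2 : ∀ᵐ t ∂volume.restrict (Set.Ioi x₀), f t = 0 := hae
      have hae' : ∀ᵐ t, t ∈ Set.Ioi x₀ → f t = 0 := by
        rwa [ae_restrict_iff' measurableSet_Ioi] at hae2
      intro x hx
      rcases eq_or_lt_of_le hx with h' | h'
      · rw [← h']; exact h0
      by_contra hne'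
      have hφx : 0 < φ x := lt_of_le_of_ne (hpos x hx) (Ne.symm hne')
      set U : Set ℝ := Set.Ioi x₀ ∩ (fun t => φ t) ⁻¹' Set.Ioi 0 with hU
      have hUopen : IsOpen U := isOpen_Ioi.inter (isOpen_Ioi.preimage φ.continuous)
      have hxU : x ∈ U := ⟨h', hφx⟩
      have hUsub : U ⊆ {t | ¬(t ∈ Set.Ioi x₀ → f t = 0)} := by
        intro t ⟨ht1, ht2⟩
        simp only [Set.mem_setOf_eq]
        intro hcon
        have := hcon ht1
        rw [hfeq t] at this
        have : φ t = 0 := by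
          field_simp [(hdpos t ht1).ne'] at this
          simpa using this
        exact absurd this (ne_of_gt ht2)
      have hU0 : volume U = 0 :=
        measure_mono_null hUsub hae'
      exact absurd hU0 (hUopen.measure_pos volume ⟨x, hxU⟩).ne'
    · intro h
      have hI0 : I = 0 := by
        rw [hI]
        rw [setIntegral_congr_fun measurableSet_Ioi
          (g := fun _ => (0 : ℝ)) (fun t ht => by rw [hfeq t, h t (le_of_lt ht), zero_div])]
        simp
      rw [hI0, mul_zero]
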